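/- Let z, w ∈ ℂ with |z| = 1 and |w| < 1. Then z·A(z,w) − conj(z)·B(z,w) = 0. (Equivalently, the pullback of the propagator 1-form ω(·,w) along the inclusion of the boundary circle into the closed unit disk vanishes, which is property (i) of the propagator: j*ω = 0 for the inclusion j of ∂D̄ × D̄ into D̄ × D̄ in the first variable.) -/

import Mathlib

open Complex

/-- `A z w` is `4πi` times the coefficient of `dz` in the propagator 1-form `ω(z,w)`. -/
noncomputable def propA (z w : ℂ) : ℂ :=
  (z - w)⁻¹ - (starRingEnd ℂ) w / (1 - z * (starRingEnd ℂ) w) - (starRingEnd ℂ) z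

/-- `B z w` is `4πi` times the coefficient of `dz̄` in the propagator 1-form `ω(z,w)`. -/
noncomputable def propB (z w : ℂ) : ℂ :=
  -((starRingEnd ℂ) z - (starRingEnd ℂ) w)⁻¹ + w / (1 - (starRingEnd ℂ) z * w) + z

/-- Boundary condition (property (i)) of the propagator: the pullback of `ω(·,w)` to the
boundary circle in the first variable vanishes. -/
theorem propagator_boundary_vanishing (z w : ℂ) (hz : ‖z‖ = 1) (hw : ‖w‖ < 1) :
    z * propA z w - (starRingEnd ℂ) z * propB z w = 0 := by
  have hz0 : z ≠ 0 := by
    intro h; rw [h] at hz; simp at hz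
  have hzc : (starRingEnd ℂ) z * z = 1 := by
    rw [mul_comm, mul_conj]
    norm_cast
    simp [Complex.normSq_eq_norm_sq, hz]
  have ha : (starRingEnd ℂ) z = z⁻¹ := eq_inv_of_mul_eq_one_left hzc
  have h1 : z - w ≠ 0 := by
    intro h
    rw [← sub_eq_zero.mp h, hz] at hw
    exact lt_irrefl 1 hw
  have h2 : 1 - z * (starRingEnd ℂ) w ≠ 0 := by
    intro h
    have h' : z * (starRingEnd ℂ) w = 1 := (sub_eq_zero.mp h).symm
    have hn : ‖z * (starRingEnd ℂ) w‖ = 1 := by rw [h']; simp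
    rw [norm_mul, hz, one_mul, RCLike.norm_conj] at hn
    rw [hn] at hw
    exact lt_irrefl 1 hw
  have h3 : (starRingEnd ℂ) z - (starRingEnd ℂ) w ≠ 0 := by
    intro h
    apply h1
    have := congrArg (starRingEnd ℂ) h
    simpa using this
  have h4 : 1 - (starRingEnd ℂ) z * w ≠ 0 := by
    intro h
    apply h2
    have := congrArg (starRingEnd ℂ) h
    simpa [mul_comm] using this
  rw [ha] at h3 h4 ⊢
  unfold propA propB
  rw [ha]
  field_simp
  ring
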